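/- For all integers a, b ≥ 0 and ν ≥ k ≥ 1, the number of (an+b)-color compositions of ν with k parts equals Σ_{j=0}^{k} a^j b^{k-j} C(k,j) C(ν+j-1, ν-k). -/

import Mathlib

open Finset

namespace ColorCompAux

def T (a b k m : ℕ) : ℕ :=
  ∑ y ∈ Finset.Nat.antidiagonalTuple k m, ∏ t, (a * (y t + 1) + b)


lemma key1 (r m : ℕ) : ∑ q ∈ range (m+1), Nat.choose (q + r) r = Nat.choose (m + r + 1) (r + 1) := by
  induction m with
  | zero => simp
  | succ m ih =>
    rw [Finset.sum_range_succ, ih]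
    have e1 : m + 1 + r = m + r + 1 := by omega
    rw [e1]
    have pas : (m + r + 1 + 1).choose (r + 1) = (m + r + 1).choose r + (m + r + 1).choose (r + 1) :=
      Nat.choose_succ_succ _ _
    omega

lemma key2 (r m : ℕ) : ∑ q ∈ range (m+1), (m + 1 - q) * Nat.choose (q + r) r
    = Nat.choose (m + r + 2) (r + 2) := by
  induction m with
  | zero => simp
  | succ m ih =>
    have split : ∀ q ∈ range (m+2), (m + 2 - q) * Nat.choose (q + r) r
        = (m + 1 - q) * Nat.choose (q + r) r + Nat.choose (q + r) r := by
      intro q hq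
      rw [mem_range] at hq
      have : m + 2 - q = (m + 1 - q) + 1 := by omega
      rw [this, Nat.add_mul, Nat.one_mul]
    rw [Finset.sum_congr rfl split, Finset.sum_add_distrib, Finset.sum_range_succ
      (fun q => (m + 1 - q) * Nat.choose (q + r) r), Nat.sub_self, Nat.zero_mul, Nat.add_zero,
      ih, key1]
    have e1 : m + 1 + r + 1 = m + r + 2 := by omega
    have e2 : m + 1 + r + 2 = m + r + 2 + 1 := by omega
    rw [e1, e2]
    have pas : (m + r + 2 + 1).choose (r + 2) = (m + r + 2).choose (r + 1) + (m + r + 2).choose (r + 2) :=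
      Nat.choose_succ_succ _ _
    omega

/-- RHS of the formula, with `m = ν - k`, `ν = m + k`. -/
def R (a b k m : ℕ) : ℕ :=
  ∑ j ∈ range (k+1), a ^ j * b ^ (k - j) * Nat.choose k j * Nat.choose (m + k + j - 1) m

lemma R_one (a b m : ℕ) : R a b 1 m = a * (m + 1) + b := by
  simp [R, Finset.sum_range_succ, Nat.choose_symm_add (a := m) (b := 1)]
  omega

lemma R_rec (a b K m : ℕ) :
    ∑ p ∈ range (m+1), (a * (p+1) + b) * R a b (K+1) (m - p) = R a b (K+2) m := by
  -- reflect the sum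
  have lhs_eq : ∑ p ∈ range (m+1), (a * (p+1) + b) * R a b (K+1) (m - p)
      = ∑ q ∈ range (m+1), (a * ((m - q) + 1) + b) * R a b (K+1) q := by
    rw [← Finset.sum_range_reflect (fun q => (a * ((m - q) + 1) + b) * R a b (K+1) q) (m+1)]
    apply Finset.sum_congr rfl
    intro p hp
    rw [mem_range] at hp
    have h1 : m - (m + 1 - 1 - p) = p := by omega
    have h2 : m + 1 - 1 - p = m - p := by omega
    rw [h1, h2]
  rw [lhs_eq]
  -- unfold R on the left and swap sums
  have expand : ∀ q ∈ range (m+1), (a * ((m - q) + 1) + b) * R a b (K+1) q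
      = ∑ j ∈ range (K+2), a ^ j * b ^ (K + 1 - j) * Nat.choose (K+1) j *
          ((a * (m - q + 1) + b) * Nat.choose (q + (K + j)) (K + j)) := by
    intro q hq
    rw [R, Finset.mul_sum]
    apply Finset.sum_congr rfl
    intro j hj
    have h1 : q + (K + 1) + j - 1 = q + (K + j) := by omega
    rw [h1, Nat.choose_symm_add (a := q) (b := K + j)]
    ring
  rw [Finset.sum_congr rfl expand, Finset.sum_comm]
  -- evaluate the inner sums
  have inner : ∀ j ∈ range (K+2),
      ∑ q ∈ range (m+1), a ^ j * b ^ (K + 1 - j) * Nat.choose (K+1) j *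
          ((a * (m - q + 1) + b) * Nat.choose (q + (K + j)) (K + j))
      = a ^ j * b ^ (K + 1 - j) * Nat.choose (K+1) j *
          (a * Nat.choose (m + (K + j) + 2) (K + j + 2)
            + b * Nat.choose (m + (K + j) + 1) (K + j + 1)) := by
    intro j hj
    rw [← Finset.mul_sum]
    congr 1
    have step : ∀ q ∈ range (m+1),
        (a * (m - q + 1) + b) * Nat.choose (q + (K + j)) (K + j)
        = a * ((m + 1 - q) * Nat.choose (q + (K + j)) (K + j))
          + b * Nat.choose (q + (K + j)) (K + j) := by
      intro q hq
      rw [mem_range] at hq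
      have : m - q + 1 = m + 1 - q := by omega
      rw [this]; ring
    rw [Finset.sum_congr rfl step, Finset.sum_add_distrib, ← Finset.mul_sum, ← Finset.mul_sum,
      key1, key2]
  rw [Finset.sum_congr rfl inner]
  -- now both sides are explicit sums; compare
  have lhs_split : ∑ j ∈ range (K+2), a ^ j * b ^ (K + 1 - j) * Nat.choose (K+1) j *
          (a * Nat.choose (m + (K + j) + 2) (K + j + 2)
            + b * Nat.choose (m + (K + j) + 1) (K + j + 1))
      = (∑ j ∈ range (K+2), a ^ (j+1) * b ^ (K + 1 - j) * Nat.choose (K+1) j *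
          Nat.choose (m + K + j + 2) (K + j + 2))
        + ∑ j ∈ range (K+2), a ^ j * b ^ (K + 2 - j) * Nat.choose (K+1) j *
          Nat.choose (m + K + j + 1) (K + j + 1) := by
    rw [← Finset.sum_add_distrib]
    apply Finset.sum_congr rfl
    intro j hj
    rw [mem_range] at hj
    have hb : b ^ (K + 2 - j) = b ^ (K + 1 - j) * b := by
      rw [← pow_succ]
      congr 1
      omega
    have h2 : m + (K + j) + 2 = m + K + j + 2 := by omega
    have h3 : m + (K + j) + 1 = m + K + j + 1 := by omega
    rw [hb, h2, h3, pow_succ]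
    ring
  rw [lhs_split, R]
  -- RHS manipulation
  have rhs_term : ∀ j ∈ range (K+3),
      a ^ j * b ^ (K + 2 - j) * Nat.choose (K+2) j * Nat.choose (m + (K+2) + j - 1) m
      = a ^ j * b ^ (K + 2 - j) * Nat.choose (K+2) j * Nat.choose (m + K + j + 1) (K + j + 1) := by
    intro j hj
    have h1 : m + (K + 2) + j - 1 = m + (K + j + 1) := by omega
    rw [h1, Nat.choose_symm_add (a := m) (b := K + j + 1)]
    congr 2
    omega
  rw [Finset.sum_congr rfl rhs_term]
  -- peel off j = 0 on RHS
  rw [Finset.sum_range_succ' (fun j => a ^ j * b ^ (K + 2 - j) * Nat.choose (K+2) j *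
    Nat.choose (m + K + j + 1) (K + j + 1)) (K+2)]
  -- pascal on the shifted terms
  have pascal : ∀ j ∈ range (K+2),
      a ^ (j+1) * b ^ (K + 2 - (j+1)) * Nat.choose (K+2) (j+1) *
        Nat.choose (m + K + (j+1) + 1) (K + (j+1) + 1)
      = a ^ (j+1) * b ^ (K + 1 - j) * Nat.choose (K+1) j *
          Nat.choose (m + K + j + 2) (K + j + 2)
        + a ^ (j+1) * b ^ (K + 1 - j) * Nat.choose (K+1) (j+1) *
          Nat.choose (m + K + j + 2) (K + j + 2) := by
    intro j hj
    have h1 : K + 2 - (j + 1) = K + 1 - j := by omega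
    have h2 : m + K + (j+1) + 1 = m + K + j + 2 := by omega
    have h3 : K + (j+1) + 1 = K + j + 2 := by omega
    have h4 : Nat.choose (K+2) (j+1) = Nat.choose (K+1) j + Nat.choose (K+1) (j+1) :=
      Nat.choose_succ_succ (K+1) j
    rw [h1, h2, h3, h4]
    ring
  rw [Finset.sum_congr rfl pascal, Finset.sum_add_distrib]
  -- now match the three pieces
  have second_piece : ∑ j ∈ range (K+2), a ^ j * b ^ (K + 2 - j) * Nat.choose (K+1) j *
          Nat.choose (m + K + j + 1) (K + j + 1)
      = (∑ j ∈ range (K+2), a ^ (j+1) * b ^ (K + 1 - j) * Nat.choose (K+1) (j+1) *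
          Nat.choose (m + K + j + 2) (K + j + 2))
        + a ^ 0 * b ^ (K + 2 - 0) * Nat.choose (K+2) 0 * Nat.choose (m + K + 0 + 1) (K + 0 + 1) := by
    rw [Finset.sum_range_succ' (fun j => a ^ j * b ^ (K + 2 - j) * Nat.choose (K+1) j *
      Nat.choose (m + K + j + 1) (K + j + 1)) (K+1)]
    have ext_zero : Nat.choose (K+1) (K+2) = 0 := by
      apply Nat.choose_eq_zero_of_lt; omega
    rw [Finset.sum_range_succ (fun j => a ^ (j+1) * b ^ (K + 1 - j) * Nat.choose (K+1) (j+1) *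
      Nat.choose (m + K + j + 2) (K + j + 2)) (K+1)]
    simp only [ext_zero, Nat.mul_zero, Nat.zero_mul, Nat.add_zero, Nat.choose_zero_right]
    congr 1
    apply Finset.sum_congr rfl
    intro j hj
    rw [mem_range] at hj
    have h1 : K + 2 - (j+1) = K + 1 - j := by omega
    have h2 : m + K + (j+1) + 1 = m + K + j + 2 := by omega
    have h3 : K + (j+1) + 1 = K + j + 2 := by omega
    rw [h1, h2, h3]
  rw [second_piece]
  ring




lemma sum_tuple_succ {M : Type*} [AddCommMonoid M] (k m : ℕ) (f : (Fin (k+1) → ℕ) → M) :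
    ∑ y ∈ Finset.Nat.antidiagonalTuple (k+1) m, f y
      = ∑ pq ∈ antidiagonal m, ∑ z ∈ Finset.Nat.antidiagonalTuple k pq.2, f (Fin.cons pq.1 z) := by
  rw [← Finset.sum_sigma (antidiagonal m) (fun pq => Finset.Nat.antidiagonalTuple k pq.2)
    (fun x => f (Fin.cons x.1.1 x.2))]
  apply Finset.sum_nbij'
    (i := fun (y : Fin (k+1) → ℕ) => (⟨(y 0, ∑ i : Fin k, y i.succ), Fin.tail y⟩ :
      Σ _pq : ℕ × ℕ, Fin k → ℕ))
    (j := fun x => Fin.cons x.1.1 x.2)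
  · intro y hy
    rw [Finset.Nat.mem_antidiagonalTuple] at hy
    rw [Finset.mem_sigma, Finset.HasAntidiagonal.mem_antidiagonal]
    constructor
    · rw [← hy, Fin.sum_univ_succ]
    · rw [Finset.Nat.mem_antidiagonalTuple]
      rfl
  · intro x hx
    rw [Finset.mem_sigma, Finset.HasAntidiagonal.mem_antidiagonal, Finset.Nat.mem_antidiagonalTuple] at hx
    rw [Finset.Nat.mem_antidiagonalTuple, Fin.sum_univ_succ]
    simp only [Fin.cons_zero, Fin.cons_succ]
    rw [hx.2, hx.1]
  · intro y _
    exact Fin.cons_self_tail y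
  · intro x hx
    rw [Finset.mem_sigma, Finset.Nat.mem_antidiagonalTuple] at hx
    obtain ⟨⟨p, q⟩, z⟩ := x
    simp only [Fin.cons_zero, Fin.cons_succ, Fin.tail_cons]
    have : ∑ i, z i = q := hx.2
    rw [this]
  · intro y _
    rw [Fin.cons_self_tail]

lemma T_succ (a b k m : ℕ) :
    T a b (k+1) m = ∑ p ∈ range (m+1), (a * (p+1) + b) * T a b k (m - p) := by
  rw [T, sum_tuple_succ, Finset.Nat.sum_antidiagonal_eq_sum_range_succ_mk
    (fun (pq : ℕ × ℕ) => ∑ z ∈ Finset.Nat.antidiagonalTuple k pq.2,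
      ∏ t : Fin (k+1), (a * ((Fin.cons pq.1 z : Fin (k+1) → ℕ) t + 1) + b)) m]
  apply Finset.sum_congr rfl
  intro p hp
  rw [T, Finset.mul_sum]
  apply Finset.sum_congr rfl
  intro z hz
  rw [Fin.prod_univ_succ]
  simp only [Fin.cons_zero, Fin.cons_succ]

lemma T_one (a b m : ℕ) : T a b 1 m = a * (m + 1) + b := by
  simp [T]


lemma T_eq_R (a b : ℕ) : ∀ k, 1 ≤ k → ∀ m, T a b k m = R a b k m := by
  intro k hk
  refine Nat.le_induction ?_ ?_ k hk
  · intro m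
    rw [T_one, R_one]
  · intro K hK ih m
    obtain ⟨K', rfl⟩ : ∃ K', K = K' + 1 := ⟨K - 1, by omega⟩
    rw [T_succ, Finset.sum_congr rfl (fun p _ => by rw [ih]), R_rec]



theorem card_eq_T (a b ν k : ℕ) (hk : 1 ≤ k) (hν : k ≤ ν) :
    Nat.card {f : Fin k → ℕ × ℕ //
        (∀ t, 1 ≤ (f t).1) ∧ (∑ t, (f t).1) = ν ∧
        (∀ t, 1 ≤ (f t).2 ∧ (f t).2 ≤ a * (f t).1 + b)} = T a b k (ν - k) := by
  classical
  have E : {f : Fin k → ℕ × ℕ //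
        (∀ t, 1 ≤ (f t).1) ∧ (∑ t, (f t).1) = ν ∧
        (∀ t, 1 ≤ (f t).2 ∧ (f t).2 ≤ a * (f t).1 + b)} ≃
      Σ y : {y : Fin k → ℕ // y ∈ Finset.Nat.antidiagonalTuple k (ν - k)},
        ∀ t, Fin (a * (y.1 t + 1) + b) := by
    refine ⟨fun f => ⟨⟨fun t => (f.1 t).1 - 1, ?_⟩, fun t => ⟨(f.1 t).2 - 1, ?_⟩⟩,
      fun x => ⟨fun t => (x.1.1 t + 1, (x.2 t).1 + 1), ?_, ?_, ?_⟩, ?_, ?_⟩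
    · rw [Finset.Nat.mem_antidiagonalTuple]
      have key : ∑ t : Fin k, ((f.1 t).1 - 1 + 1) = ν := by
        rw [Finset.sum_congr rfl (fun t _ => Nat.sub_add_cancel (f.2.1 t))]
        exact f.2.2.1
      rw [Finset.sum_add_distrib, Finset.sum_const, card_univ, Fintype.card_fin,
        smul_eq_mul, mul_one] at key
      omega
    · have h1 : (f.1 t).1 - 1 + 1 = (f.1 t).1 := Nat.sub_add_cancel (f.2.1 t)
      show (f.1 t).2 - 1 < a * ((f.1 t).1 - 1 + 1) + b
      rw [h1]
      have h2 := (f.2.2.2 t).1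
      have h3 := (f.2.2.2 t).2
      omega
    · intro t
      exact Nat.le_add_left 1 _
    · have hy := x.1.2
      rw [Finset.Nat.mem_antidiagonalTuple] at hy
      rw [Finset.sum_add_distrib, Finset.sum_const, card_univ, Fintype.card_fin,
        smul_eq_mul, mul_one, hy]
      omega
    · intro t
      refine ⟨Nat.le_add_left 1 _, ?_⟩
      show (x.2 t).1 + 1 ≤ a * (x.1.1 t + 1) + b
      have := (x.2 t).2
      omega
    · intro f
      apply Subtype.ext
      funext t
      exact Prod.ext (Nat.sub_add_cancel (f.2.1 t)) (Nat.sub_add_cancel (f.2.2.2 t).1)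
    · intro x
      rfl
  rw [Nat.card_congr E, Nat.card_eq_fintype_card, Fintype.card_sigma]
  simp only [Fintype.card_pi, Fintype.card_fin]
  rw [Finset.univ_eq_attach, T,
    ← Finset.sum_attach (Finset.Nat.antidiagonalTuple k (ν - k))
      (fun y => ∏ t, (a * (y t + 1) + b))]


end ColorCompAux

/-- The number of `(an+b)`-color compositions of `ν` with `k` parts, i.e. `k`-tuples
`((i₁,ℓ₁),…,(i_k,ℓ_k))` with `iₜ ≥ 1`, `Σ iₜ = ν` and `1 ≤ ℓₜ ≤ a·iₜ + b`, equals
`Σ_{j=0}^{k} aʲ b^{k-j} C(k,j) C(ν+j-1, ν-k)`. -/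
theorem card_color_compositions (a b ν k : ℕ) (hk : 1 ≤ k) (hν : k ≤ ν) :
    Nat.card {f : Fin k → ℕ × ℕ //
        (∀ t, 1 ≤ (f t).1) ∧ (∑ t, (f t).1) = ν ∧
        (∀ t, 1 ≤ (f t).2 ∧ (f t).2 ≤ a * (f t).1 + b)} =
      ∑ j ∈ Finset.range (k + 1),
        a ^ j * b ^ (k - j) * Nat.choose k j * Nat.choose (ν + j - 1) (ν - k) := by
  rw [ColorCompAux.card_eq_T a b ν k hk hν, ColorCompAux.T_eq_R a b k hk (ν - k),
    ColorCompAux.R]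
  apply Finset.sum_congr rfl
  intro j hj
  congr 1
  congr 1
  omega
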